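/- Let E_1, E_2 > 0 with E_1 + E_2 = 1, let B_1, B_2 be independent Beta(1, M-1) random variables with M = 3, and p uniform on (0,1) independent of them. Define E_1' = E_1 - (1-p)E_1 B_1 + p E_2 B_2. Then there exists a constant c > 0 such that P(E_1' < ε) ≤ c ε^3 for all ε ∈ (0,1). -/

import Mathlib

open MeasureTheory ProbabilityTheory Real Set Filter
open scoped ENNReal

noncomputable def betaMeasure (a b : ℝ) : Measure ℝ :=
  (volume.restrict (Set.Ioo (0:ℝ) 1)).withDensity
    (fun x => ENNReal.ofReal (Real.Gamma (a + b) / (Real.Gamma a * Real.Gamma b)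
      * x ^ (a - 1) * (1 - x) ^ (b - 1)))

lemma betaMeasure_compl_null (a b : ℝ) : _root_.betaMeasure a b ((Set.Ioo (0:ℝ) 1)ᶜ) = 0 := by
  apply withDensity_absolutelyContinuous (volume.restrict (Set.Ioo (0:ℝ) 1)) _
  rw [Measure.restrict_apply measurableSet_Ioo.compl]
  simp

/-- For M = 3, P(E₁' < ε) ≤ c ε³ for some constant c > 0. -/
theorem stmt8 {Ω : Type*} [MeasurableSpace Ω] (P : Measure Ω) [IsProbabilityMeasure P]
    (E1 E2 : ℝ) (hE1 : 0 < E1) (hE2 : 0 < E2) (hsum : E1 + E2 = 1)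
    (B1 B2 p : Ω → ℝ)
    (hmB1 : Measurable B1) (hmB2 : Measurable B2) (hmp : Measurable p)
    (hindep : iIndepFun ![B1, B2, p] P)
    (hB1 : P.map B1 = _root_.betaMeasure 1 2)
    (hB2 : P.map B2 = _root_.betaMeasure 1 2)
    (hp : P.map p = volume.restrict (Set.Ioo (0 : ℝ) 1))
    (E1' : Ω → ℝ)
    (hE1' : E1' = fun ω => E1 - (1 - p ω) * E1 * B1 ω + p ω * E2 * B2 ω) :
    ∃ c > 0, ∀ ε ∈ Set.Ioo (0 : ℝ) 1,
      P {ω | E1' ω < ε} ≤ ENNReal.ofReal (c * ε ^ 3) := by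
  refine ⟨2 / E1 ^ 3, by positivity, fun ε hε => ?_⟩
  obtain ⟨hε0, hε1⟩ := hε
  set δ := ε / E1 with hδdef
  have hδ0 : 0 < δ := div_pos hε0 hE1
  -- null sets
  have hnull1 : P (B1 ⁻¹' (Set.Ioo (0:ℝ) 1)ᶜ) = 0 := by
    rw [← Measure.map_apply hmB1 measurableSet_Ioo.compl, hB1, betaMeasure_compl_null]
  have hnull2 : P (B2 ⁻¹' (Set.Ioo (0:ℝ) 1)ᶜ) = 0 := by
    rw [← Measure.map_apply hmB2 measurableSet_Ioo.compl, hB2, betaMeasure_compl_null]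
  have hnull3 : P (p ⁻¹' (Set.Ioo (0:ℝ) 1)ᶜ) = 0 := by
    rw [← Measure.map_apply hmp measurableSet_Ioo.compl, hp,
      Measure.restrict_apply measurableSet_Ioo.compl]
    simp
  -- set inclusion
  have hsub : {ω | E1' ω < ε} ⊆ (B1 ⁻¹' (Set.Ioi (1 - δ)) ∩ p ⁻¹' (Set.Iio δ)) ∪
      (B1 ⁻¹' (Set.Ioo (0:ℝ) 1)ᶜ ∪ B2 ⁻¹' (Set.Ioo (0:ℝ) 1)ᶜ ∪ p ⁻¹' (Set.Ioo (0:ℝ) 1)ᶜ) := by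
    intro ω hω
    by_cases h1 : B1 ω ∈ Set.Ioo (0:ℝ) 1
    · by_cases h2 : B2 ω ∈ Set.Ioo (0:ℝ) 1
      · by_cases h3 : p ω ∈ Set.Ioo (0:ℝ) 1
        · left
          simp only [Set.mem_setOf_eq, hE1'] at hω
          obtain ⟨hb0, hb1⟩ := h1
          obtain ⟨hc0, hc1⟩ := h2
          obtain ⟨hp0, hp1⟩ := h3
          have k1 : 0 < E1 * (1 - p ω) * (1 - B1 ω) := by apply mul_pos (mul_pos hE1 (by linarith)); linarith
          have k2 : 0 < p ω * E2 * B2 ω := by positivity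
          have k3 : 0 < p ω * E1 * B1 ω := by positivity
          have hpδ : p ω < δ := by
            rw [hδdef, lt_div_iff₀ hE1]
            nlinarith [k1, k2]
          have hBδ : 1 - δ < B1 ω := by
            have h4 : (1 - B1 ω) * E1 < ε := by nlinarith [k2, k3]
            have h5 : 1 - B1 ω < δ := by rw [hδdef, lt_div_iff₀ hE1]; exact h4
            linarith
          exact ⟨hBδ, hpδ⟩
        · right; right; exact h3
      · right; left; right; exact h2
    · right; left; left; exact h1
  calc P {ω | E1' ω < ε} ≤ P (B1 ⁻¹' (Set.Ioi (1 - δ)) ∩ p ⁻¹' (Set.Iio δ)) +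
      P (B1 ⁻¹' (Set.Ioo (0:ℝ) 1)ᶜ ∪ B2 ⁻¹' (Set.Ioo (0:ℝ) 1)ᶜ ∪ p ⁻¹' (Set.Ioo (0:ℝ) 1)ᶜ) :=
        le_trans (measure_mono hsub) (measure_union_le _ _)
    _ = P (B1 ⁻¹' (Set.Ioi (1 - δ)) ∩ p ⁻¹' (Set.Iio δ)) := by
        have : P (B1 ⁻¹' (Set.Ioo (0:ℝ) 1)ᶜ ∪ B2 ⁻¹' (Set.Ioo (0:ℝ) 1)ᶜ ∪
            p ⁻¹' (Set.Ioo (0:ℝ) 1)ᶜ) = 0 := by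
          refine measure_union_null (measure_union_null hnull1 hnull2) hnull3
        rw [this, add_zero]
    _ = P (B1 ⁻¹' (Set.Ioi (1 - δ))) * P (p ⁻¹' (Set.Iio δ)) := by
        have hind : IndepFun B1 p P := by
          have := hindep.indepFun (i := 0) (j := 2) (by decide)
          simpa using this
        exact hind.measure_inter_preimage_eq_mul _ _ measurableSet_Ioi measurableSet_Iio
    _ ≤ (ENNReal.ofReal (2 * δ) * ENNReal.ofReal δ) * ENNReal.ofReal δ := by
        gcongr
        · -- Beta tail bound
          rw [← Measure.map_apply hmB1 measurableSet_Ioi, hB1, _root_.betaMeasure,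
            withDensity_apply _ measurableSet_Ioi]
          rw [Measure.restrict_restrict measurableSet_Ioi]
          calc ∫⁻ x in Set.Ioi (1 - δ) ∩ Set.Ioo (0:ℝ) 1,
                ENNReal.ofReal (Real.Gamma (1 + 2) / (Real.Gamma 1 * Real.Gamma 2)
                  * x ^ ((1:ℝ) - 1) * (1 - x) ^ ((2:ℝ) - 1)) ∂volume
              ≤ ∫⁻ _ in Set.Ioi (1 - δ) ∩ Set.Ioo (0:ℝ) 1, ENNReal.ofReal (2 * δ) ∂volume := by
                refine setLIntegral_mono' (measurableSet_Ioi.inter measurableSet_Ioo)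
                  fun x hx => ?_
                apply ENNReal.ofReal_le_ofReal
                have hΓ : Real.Gamma (1 + 2) / (Real.Gamma 1 * Real.Gamma 2) = 2 := by
                  rw [show ((1:ℝ) + 2) = 3 by norm_num, Real.Gamma_one, Real.Gamma_two]
                  rw [show (3:ℝ) = (2:ℕ) + 1 by norm_num, Real.Gamma_nat_eq_factorial]
                  norm_num
                rw [hΓ]
                obtain ⟨hx1, hx2, hx3⟩ := hx
                rw [show ((1:ℝ) - 1) = 0 by norm_num, show ((2:ℝ) - 1) = 1 by norm_num,
                  Real.rpow_zero, Real.rpow_one]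
                have : 1 - x < δ := by simp only [Set.mem_Ioi] at hx1; linarith
                nlinarith
            _ = ENNReal.ofReal (2 * δ) * volume (Set.Ioi (1 - δ) ∩ Set.Ioo (0:ℝ) 1) := by
                rw [setLIntegral_const]
            _ ≤ ENNReal.ofReal (2 * δ) * ENNReal.ofReal δ := by
                gcongr
                calc volume (Set.Ioi (1 - δ) ∩ Set.Ioo (0:ℝ) 1)
                    ≤ volume (Set.Ioo (1 - δ) 1) := by
                      refine measure_mono fun x hx => ⟨hx.1, hx.2.2⟩
                  _ = ENNReal.ofReal δ := by rw [Real.volume_Ioo]; norm_num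
        · rw [← Measure.map_apply hmp measurableSet_Iio, hp,
            Measure.restrict_apply measurableSet_Iio]
          calc volume (Set.Iio δ ∩ Set.Ioo (0:ℝ) 1) ≤ volume (Set.Ioo 0 δ) := by
                refine measure_mono fun x hx => ⟨hx.2.1, hx.1⟩
            _ = ENNReal.ofReal δ := by rw [Real.volume_Ioo]; norm_num
    _ = ENNReal.ofReal (2 / E1 ^ 3 * ε ^ 3) := by
        rw [← ENNReal.ofReal_mul (by positivity), ← ENNReal.ofReal_mul (by positivity)]
        congr 1
        field_simp [hδdef]
        rw [hδdef, div_pow, div_mul_cancel₀ _ (by positivity)]
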